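/- Let (s,t) ∈ ℂ² with |s|² = |t|² + 1, and let h(z) = e^{|z|²/4}. Then ∫_ℂ |K^{(s,t)}(z,w)| h(w)² dλ(w) = 2√|s| · h(z)² for all z ∈ ℂ, and ∫_ℂ |K^{(s,t)}(z,w)| h(z)² dλ(z) = 2√|s| · h(w)² for all w ∈ ℂ. Consequently, by Schur's test, the integral operator with kernel |K^{(s,t)}(z,w)| is bounded on L²(ℂ, dλ) with norm at most 2√|s|. -/

import Mathlib

open MeasureTheory Complex
open Real Filter
open scoped NNReal ENNReal

lemma rclike_coe : (RCLike.ofReal : ℝ → ℂ) = Complex.ofReal := rfl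

lemma real1d (a c d : ℝ) (ha : 0 < a) :
    ∫ x : ℝ, rexp (-a*x^2 + c*x + d) = Real.sqrt (π/a) * rexp (d + c^2/(4*a)) := by
  have hb : ((-a : ℂ)).re < 0 := by simpa using ha
  have h := integral_cexp_quadratic hb (c:ℂ) (d:ℂ)
  rw [← RCLike.ofReal_inj (K := ℂ), ← integral_ofReal]
  simp only [rclike_coe]
  simp_rw [Complex.ofReal_exp]
  push_cast
  rw [h]
  have hπa : (0:ℝ) ≤ π/a := by positivity
  have h3 : ((π:ℂ) / -(-a:ℂ)) ^ (1/2 : ℂ) = ((Real.sqrt (π/a) : ℝ) : ℂ) := by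
    rw [Real.sqrt_eq_rpow, Complex.ofReal_cpow hπa]
    norm_num
  have h4 : cexp ((d:ℂ) - (c:ℂ)^2 / (4 * (-a:ℂ))) = cexp ((d:ℂ) + (c:ℂ)^2/(4*(a:ℂ))) := by
    congr 1
    have ha' : (a:ℂ) ≠ 0 := by exact_mod_cast ha.ne'
    field_simp
    ring
  rw [h3, h4]

lemma integrable1d (a c d : ℝ) (ha : 0 < a) :
    Integrable (fun x : ℝ => rexp (-a*x^2 + c*x + d)) := by
  have h := (integrable_cexp_quadratic (b := (a:ℂ)) (by simpa using ha) (c:ℂ) (d:ℂ)).norm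
  refine h.congr (Filter.Eventually.of_forall fun x => ?_)
  simp only [Complex.norm_exp]
  congr 1
  simp [Complex.add_re, Complex.mul_re, ← Complex.ofReal_pow]


lemma aux_amgm (k u v : ℝ) (hk : 0 < k) : u*v ≤ u^2/(4*k) + k*v^2 := by
  have h : u^2/(4*k) + k*v^2 - u*v = (u-2*k*v)^2/(4*k) := by field_simp; ring
  nlinarith [div_nonneg (sq_nonneg (u-2*k*v)) (by positivity : (0:ℝ) ≤ 4*k)]

lemma integrable2d (a b c d e : ℝ) (ha : 0 < a) (hD : 0 < 4*a*b - c^2) :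
    Integrable (fun p : ℝ × ℝ => rexp (-a*p.1^2 - b*p.2^2 + c*p.1*p.2 + d*p.1 + e*p.2)) := by
  have hb : 0 < b := by nlinarith [sq_nonneg c]
  set θ : ℝ := (c^2/(4*a*b) + 1)/2 with hθdef
  have hθ1 : θ < 1 := by
    have : c^2/(4*a*b) < 1 := (div_lt_one (by nlinarith)).2 (by nlinarith)
    rw [hθdef]; linarith
  have hθ0 : c^2/(4*a*b) < θ := by
    have : 0 ≤ c^2/(4*a*b) := by positivity
    rw [hθdef]; linarith
  have hθpos : 0 < θ := lt_of_le_of_lt (by positivity) hθ0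
  have hA : 0 < a - c^2/(4*b*θ) := by
    have h1 : c^2/(4*b*θ) < a := by
      rw [div_lt_iff₀ (by positivity)]
      have := (div_lt_iff₀ (by positivity : (0:ℝ) < 4*a*b)).1 hθ0
      nlinarith
    linarith
  have hB : 0 < b*(1-θ) := by nlinarith
  have hint := ((integrable1d _ d 0 hA).mul_prod (integrable1d _ e 0 hB))
  refine hint.mono' ((Continuous.aestronglyMeasurable (by continuity))) (Filter.Eventually.of_forall fun p => ?_)
  rw [Real.norm_eq_abs, Real.abs_exp, ← Real.exp_add]
  apply Real.exp_le_exp.2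
  have key : c*p.1*p.2 ≤ (c*p.1)^2/(4*(b*θ)) + (b*θ)*p.2^2 := aux_amgm (b*θ) (c*p.1) p.2 (by positivity)
  have expand : (c*p.1)^2/(4*(b*θ)) = c^2/(4*b*θ) * p.1^2 := by
    field_simp
  nlinarith [key]

lemma gauss2 (a b c d e : ℝ) (ha : 0 < a) (hD : 0 < 4*a*b - c^2) :
    ∫ p : ℝ × ℝ, rexp (-a*p.1^2 - b*p.2^2 + c*p.1*p.2 + d*p.1 + e*p.2)
      = 2*π/Real.sqrt (4*a*b - c^2) * rexp ((a*e^2 + b*d^2 + c*d*e)/(4*a*b - c^2)) := by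
  have hb : 0 < b := by nlinarith [sq_nonneg c]
  have hA2 : 0 < a - c^2/(4*b) := by
    rw [sub_pos, div_lt_iff₀ (by positivity)]; nlinarith
  rw [show (volume : Measure (ℝ×ℝ)) = volume.prod volume from rfl,
    MeasureTheory.integral_prod _ (integrable2d a b c d e ha hD)]
  have inner : ∀ x : ℝ, (∫ y : ℝ, rexp (-a*x^2 - b*y^2 + c*x*y + d*x + e*y))
      = Real.sqrt (π/b) * rexp (-(a - c^2/(4*b))*x^2 + (d + c*e/(2*b))*x + e^2/(4*b)) := by
    intro x
    have h1 : ∀ y : ℝ, rexp (-a*x^2 - b*y^2 + c*x*y + d*x + e*y)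
        = rexp (-b*y^2 + (c*x+e)*y + (-a*x^2 + d*x)) := fun y => by congr 1; ring
    simp_rw [h1, real1d b (c*x+e) (-a*x^2+d*x) hb]
    congr 1
    field_simp
    ring
  simp_rw [inner, MeasureTheory.integral_const_mul,
    real1d (a - c^2/(4*b)) (d + c*e/(2*b)) (e^2/(4*b)) hA2]
  rw [← mul_assoc, ← Real.sqrt_mul (by positivity)]
  have hs : π/b * (π/(a - c^2/(4*b))) = (2*π)^2/(4*a*b - c^2) := by
    have h1 : b * (a - c^2/(4*b)) ≠ 0 := by positivity
    rw [div_mul_div_comm, div_eq_div_iff h1 hD.ne']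
    field_simp
    ring
  rw [hs, Real.sqrt_div (by positivity) _, Real.sqrt_sq (by positivity)]
  congr 2
  have h1 : (4:ℝ)*(a - c^2/(4*b)) ≠ 0 := by positivity
  rw [div_add_div _ _ (by positivity) h1, div_eq_div_iff (by positivity) hD.ne']
  field_simp
  ring
lemma cgauss (m g : ℂ) (hm : 4 * Complex.normSq m < 1) :
    ∫ w : ℂ, rexp ((m * (starRingEnd ℂ w)^2 + g * (starRingEnd ℂ w)).re - Complex.normSq w / 2)
      = 2*π/Real.sqrt (1 - 4*Complex.normSq m)
        * rexp ((Complex.normSq g/2 + (m * (starRingEnd ℂ g)^2).re)/(1 - 4*Complex.normSq m)) := by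
  have hnm : Complex.normSq m = m.re^2 + m.im^2 := by rw [Complex.normSq_apply]; ring
  have ha : 0 < 1/2 - m.re := by nlinarith [sq_nonneg m.im]
  have hD : 0 < 4*(1/2 - m.re)*(1/2 + m.re) - (2*m.im)^2 := by nlinarith
  have h := (Complex.volume_preserving_equiv_real_prod.symm measurableEquivRealProd).integral_comp
    (MeasurableEquiv.measurableEmbedding _)
    (fun w => rexp ((m * (starRingEnd ℂ w)^2 + g * (starRingEnd ℂ w)).re - Complex.normSq w / 2))
  rw [← h]
  have hpt : ∀ p : ℝ × ℝ,
      rexp ((m * (starRingEnd ℂ (measurableEquivRealProd.symm p))^2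
          + g * (starRingEnd ℂ (measurableEquivRealProd.symm p))).re
        - Complex.normSq (measurableEquivRealProd.symm p) / 2)
      = rexp (-(1/2 - m.re)*p.1^2 - (1/2 + m.re)*p.2^2 + (2*m.im)*p.1*p.2 + g.re*p.1 + g.im*p.2) := by
    intro p
    congr 1
    simp [Complex.measurableEquivRealProd_symm_apply, Complex.normSq_apply, pow_two,
      Complex.mul_re, Complex.mul_im, Complex.add_re]
    ring
  simp_rw [hpt, gauss2 _ _ _ _ _ ha hD]
  have h1 : 4*(1/2 - m.re)*(1/2 + m.re) - (2*m.im)^2 = 1 - 4*Complex.normSq m := by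
    rw [hnm]; ring
  rw [h1]
  congr 2
  rw [Complex.normSq_apply g]
  simp [pow_two, Complex.mul_re, Complex.mul_im]
  ring
open scoped NNReal ENNReal

noncomputable def gaussMeasure : Measure ℂ :=
  volume.withDensity (fun z => ENNReal.ofReal (Real.exp (-(‖z‖)^2) / Real.pi))

noncomputable def csqrt (z : ℂ) : ℂ := z ^ ((1:ℂ)/2)

noncomputable def Kst (s t z w : ℂ) : ℂ :=
  (csqrt s)⁻¹ *
    Complex.exp ((t*z^2 - starRingEnd ℂ (t*w^2) + 2*z*(starRingEnd ℂ w)) / (2*s))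

instance : SigmaFinite gaussMeasure := by
  unfold gaussMeasure; infer_instance

lemma integral_gaussMeasure (F : ℂ → ℝ) :
    ∫ w, F w ∂gaussMeasure = ∫ w, (rexp (-(‖w‖)^2) / π) * F w := by
  have meas : Measurable fun z : ℂ => Real.toNNReal (rexp (-(‖z‖)^2) / π) := by
    apply Measurable.real_toNNReal
    exact (Continuous.measurable (by continuity))
  rw [gaussMeasure,
    show (fun z : ℂ => ENNReal.ofReal (rexp (-(‖z‖)^2) / π))
      = (fun z : ℂ => ((Real.toNNReal (rexp (-(‖z‖)^2) / π) : ℝ≥0) : ℝ≥0∞)) from rfl,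
    integral_withDensity_eq_integral_smul meas F]
  congr 1; funext w
  rw [NNReal.smul_def, smul_eq_mul, Real.coe_toNNReal _ (by positivity)]

lemma kst_abs (s t z w : ℂ) (hs : s ≠ 0) :
    ‖Kst s t z w‖ = (Real.sqrt (‖s‖))⁻¹ *
      rexp (((t*z^2 - starRingEnd ℂ (t*w^2) + 2*z*(starRingEnd ℂ w)) / (2*s)).re) := by
  rw [Kst, norm_mul, norm_inv, Complex.norm_exp]
  congr 2
  rw [csqrt, Complex.norm_cpow_of_ne_zero hs]
  simp [Real.sqrt_eq_rpow]

lemma keyA (s t : ℂ) (h2 : Complex.normSq s = Complex.normSq t + 1) (z : ℂ) :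
    ∫ w, ‖Kst s t z w‖ * (rexp ((‖w‖)^2/4))^2 ∂gaussMeasure
      = 2 * Real.sqrt (‖s‖) * (rexp ((‖z‖)^2/4))^2 := by
  have hns : 0 < Complex.normSq s := by nlinarith [Complex.normSq_nonneg t]
  have hs : s ≠ 0 := by
    intro h0; rw [h0] at hns; simp at hns
  have hcs : (starRingEnd ℂ) s ≠ 0 := by simpa using hs
  set m : ℂ := -(starRingEnd ℂ t)/(2*s) with hm_def
  set g : ℂ := z/s with hg_def
  have hnm : Complex.normSq m = Complex.normSq t / (4 * Complex.normSq s) := by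
    rw [hm_def, map_div₀ Complex.normSq, Complex.normSq_neg, Complex.normSq_conj,
      Complex.normSq_mul]
    norm_num
  have hm4 : 4 * Complex.normSq m < 1 := by
    rw [hnm, mul_div_assoc', div_lt_one (by positivity)]
    nlinarith
  have hDv : 1 - 4*Complex.normSq m = (Complex.normSq s)⁻¹ := by
    rw [hnm, h2]
    have h1 : Complex.normSq t + 1 > 0 := by nlinarith [Complex.normSq_nonneg t]
    field_simp
    ring
  have hg2 : Complex.normSq g = Complex.normSq z / Complex.normSq s := by
    rw [hg_def, map_div₀]
  have hmre : (m * (starRingEnd ℂ g)^2).re * Complex.normSq s = -((t*z^2/(2*s)).re) := by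
    have hc : m * (starRingEnd ℂ g)^2 * ((Complex.normSq s : ℝ) : ℂ)
        = -(starRingEnd ℂ (t*z^2/(2*s))) := by
      rw [← Complex.mul_conj, hm_def, hg_def]
      simp only [map_div₀, map_mul, map_pow, map_neg, Complex.conj_conj, map_ofNat]
      field_simp
    have h3 := congrArg Complex.re hc
    simp only [Complex.mul_re, Complex.ofReal_re, Complex.ofReal_im, mul_zero, sub_zero,
      Complex.neg_re, Complex.conj_re] at h3
    exact h3
  have hQ : (Complex.normSq g/2 + (m * (starRingEnd ℂ g)^2).re)/(1 - 4*Complex.normSq m)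
      = Complex.normSq z / 2 - (t*z^2/(2*s)).re := by
    rw [hDv, div_eq_mul_inv, inv_inv, add_mul, hmre, hg2]
    field_simp
    ring
  -- pointwise integrand identity
  have hpt : ∀ w : ℂ, (rexp (-(‖w‖)^2) / π) *
        (‖Kst s t z w‖ * (rexp ((‖w‖)^2/4))^2)
      = ((Real.sqrt (‖s‖))⁻¹ / π * rexp ((t*z^2/(2*s)).re)) *
        rexp ((m * (starRingEnd ℂ w)^2 + g * (starRingEnd ℂ w)).re - Complex.normSq w / 2) := by
    intro w
    rw [kst_abs s t z w hs]
    have eE : (t*z^2 - starRingEnd ℂ (t*w^2) + 2*z*(starRingEnd ℂ w)) / (2*s)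
        = t*z^2/(2*s) + (m * (starRingEnd ℂ w)^2 + g * (starRingEnd ℂ w)) := by
      rw [hm_def, hg_def]
      simp only [map_mul, map_pow]
      field_simp
      ring
    rw [eE, Complex.add_re]
    have eexp : rexp (-(‖w‖)^2) *
        (rexp ((t*z^2/(2*s)).re + (m * (starRingEnd ℂ w)^2 + g * (starRingEnd ℂ w)).re)
          * (rexp ((‖w‖)^2/4))^2)
        = rexp ((t*z^2/(2*s)).re)
          * rexp ((m * (starRingEnd ℂ w)^2 + g * (starRingEnd ℂ w)).re - Complex.normSq w/2) := by
      simp only [pow_two, ← Real.exp_add]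
      congr 1
      rw [← Complex.sq_norm w]; ring
    linear_combination ((Real.sqrt (‖s‖))⁻¹ / π) * eexp
  rw [integral_gaussMeasure]
  simp_rw [hpt, MeasureTheory.integral_const_mul, cgauss m g hm4, hQ, hDv]
  rw [Real.sqrt_inv, ← Complex.norm_def]
  have habs : 0 < ‖s‖ := by
    rwa [Complex.norm_def, Real.sqrt_pos]
  have hsq : Real.sqrt (‖s‖) * Real.sqrt (‖s‖) = ‖s‖ :=
    Real.mul_self_sqrt habs.le
  have hz2 : (rexp ((‖z‖)^2/4))^2 = rexp (Complex.normSq z / 2) := by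
    rw [pow_two (rexp ((‖z‖)^2/4)), ← Real.exp_add, ← Complex.sq_norm z]
    congr 1; ring
  rw [hz2, Real.exp_sub]
  have h5 : Real.sqrt (‖s‖) > 0 := Real.sqrt_pos.2 habs
  have hsq2 : Real.sqrt (‖s‖)^2 = ‖s‖ := Real.sq_sqrt habs.le
  field_simp
  linear_combination (-1 : ℝ) * hsq2

lemma kst_abs_symm (s t z w : ℂ) (hs : s ≠ 0) :
    ‖Kst s t z w‖ = ‖Kst (starRingEnd ℂ s) (-t) w z‖ := by
  have hcs : (starRingEnd ℂ) s ≠ 0 := by simpa using hs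
  rw [kst_abs s t z w hs, kst_abs _ _ _ _ hcs]
  congr 1
  · rw [Complex.norm_conj]
  · congr 1
    rw [← Complex.conj_re ((-t*w^2 - starRingEnd ℂ (-t*z^2) + 2*w*(starRingEnd ℂ z)) / (2*(starRingEnd ℂ s)))]
    congr 1
    simp only [map_div₀, map_mul, map_pow, map_sub, map_add, map_neg, Complex.conj_conj, map_ofNat]
    field_simp
    ring

lemma keyB (s t : ℂ) (h2 : Complex.normSq s = Complex.normSq t + 1) (w : ℂ) :
    ∫ z, ‖Kst s t z w‖ * (rexp ((‖z‖)^2/4))^2 ∂gaussMeasure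
      = 2 * Real.sqrt (‖s‖) * (rexp ((‖w‖)^2/4))^2 := by
  have hns : 0 < Complex.normSq s := by nlinarith [Complex.normSq_nonneg t]
  have hs : s ≠ 0 := by intro h0; rw [h0] at hns; simp at hns
  have h2' : Complex.normSq (starRingEnd ℂ s) = Complex.normSq (-t) + 1 := by
    rwa [Complex.normSq_conj, Complex.normSq_neg]
  have h := keyA (starRingEnd ℂ s) (-t) h2' w
  rw [Complex.norm_conj] at h
  rw [← h]
  congr 1
  funext z
  rw [kst_abs_symm s t z w hs]

theorem schur_test_bound (s t : ℂ)
    (h : (‖s‖)^2 = (‖t‖)^2 + 1) :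
    (∀ z : ℂ, ∫ w, ‖Kst s t z w‖ * (Real.exp ((‖w‖)^2/4))^2 ∂gaussMeasure
        = 2 * Real.sqrt (‖s‖) * (Real.exp ((‖z‖)^2/4))^2) ∧
    (∀ w : ℂ, ∫ z, ‖Kst s t z w‖ * (Real.exp ((‖z‖)^2/4))^2 ∂gaussMeasure
        = 2 * Real.sqrt (‖s‖) * (Real.exp ((‖w‖)^2/4))^2) ∧
    (∀ f : ℂ → ℂ, Integrable (fun z => (‖f z‖)^2) gaussMeasure →
      Real.sqrt (∫ z, (∫ w, ‖Kst s t z w‖ * ‖f w‖ ∂gaussMeasure)^2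
          ∂gaussMeasure)
        ≤ 2 * Real.sqrt (‖s‖) *
          Real.sqrt (∫ z, (‖f z‖)^2 ∂gaussMeasure)) := by
  have h2 : Complex.normSq s = Complex.normSq t + 1 := by
    rw [← Complex.sq_norm, ← Complex.sq_norm]; exact h
  refine ⟨keyA s t h2, keyB s t h2, ?_⟩
  intro f hf2
  have habs : 0 < ‖s‖ := by
    nlinarith [norm_nonneg s, norm_nonneg t,
      sq_nonneg (‖t‖)]
  set C : ℝ := 2 * Real.sqrt (‖s‖) with hC
  have hCpos : 0 < C := by positivity
  -- continuity of kernel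
  have hQc : Continuous (fun p : ℂ × ℂ => ‖Kst s t p.1 p.2‖) := by
    apply continuous_norm.comp
    unfold Kst
    apply continuous_const.mul
    apply Complex.continuous_exp.comp
    apply Continuous.div_const
    continuity
  -- notation
  set Q : ℂ → ℂ → ℝ := fun z w => ‖Kst s t z w‖ with hQ
  set hh : ℂ → ℝ := fun z => (Real.exp ((‖z‖)^2/4))^2 with hhh
  set H : ℂ → ℝ≥0∞ := fun z => ENNReal.ofReal (hh z) with hH
  have hhpos : ∀ z, 0 < hh z := fun z => by positivity
  have hH0 : ∀ z, H z ≠ 0 := fun z => by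
    simp [hH, ENNReal.ofReal_eq_zero, not_le, hhpos z]
  have hHtop : ∀ z, H z ≠ ∞ := fun z => ENNReal.ofReal_ne_top
  set F : ℂ → ℝ := fun w => ‖f w‖ with hF
  have hF0 : ∀ w, 0 ≤ F w := fun w => norm_nonneg _
  have hFaem : AEMeasurable F gaussMeasure := by
    have h1 : AEMeasurable (fun z => (F z)^2) gaussMeasure := hf2.aemeasurable
    have h2' := Real.continuous_sqrt.measurable.comp_aemeasurable h1
    refine h2'.congr (Filter.Eventually.of_forall fun z => ?_)
    simp [Real.sqrt_sq (hF0 z)]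
  set G : ℂ → ℝ := fun x => |hFaem.mk F x| with hG
  have hGmeas : Measurable G := hFaem.measurable_mk.abs
  have hG0 : ∀ x, 0 ≤ G x := fun x => abs_nonneg _
  have hFG : F =ᵐ[gaussMeasure] G := by
    filter_upwards [hFaem.ae_eq_mk] with x hx
    rw [hG]; simp only [← hx]
    rw [_root_.abs_of_nonneg (hF0 x)]
  set QQ : ℂ → ℂ → ℝ≥0∞ := fun z w => ENNReal.ofReal (Q z w) with hQQ
  set GG : ℂ → ℝ≥0∞ := fun w => ENNReal.ofReal (G w) with hGG
  have hGGtop : ∀ w, GG w ≠ ∞ := fun w => ENNReal.ofReal_ne_top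
  have hQQm : Measurable (fun p : ℂ × ℂ => QQ p.1 p.2) :=
    ENNReal.measurable_ofReal.comp hQc.measurable
  have hQQm1 : ∀ z, Measurable (QQ z) := fun z =>
    ENNReal.measurable_ofReal.comp ((hQc.comp (Continuous.prodMk_right z)).measurable)
  have hQQm2 : ∀ w, Measurable (fun z => QQ z w) := fun w =>
    ENNReal.measurable_ofReal.comp ((hQc.comp (continuous_id.prodMk continuous_const)).measurable)
  have hHmeas : Measurable H := by
    apply ENNReal.measurable_ofReal.comp
    apply Continuous.measurable
    continuity
  have hGGmeas : Measurable GG := ENNReal.measurable_ofReal.comp hGmeas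
  -- integrability and lintegral identities from keyA/keyB
  have int1 : ∀ z, Integrable (fun w => Q z w * hh w) gaussMeasure := by
    intro z
    by_contra hcon
    have h0 := MeasureTheory.integral_undef hcon
    rw [keyA s t h2 z] at h0
    have hpos : 0 < 2 * Real.sqrt (‖s‖) * (Real.exp ((‖z‖)^2/4))^2 := by
      positivity
    rw [h0] at hpos
    exact lt_irrefl _ hpos
  have int2 : ∀ w, Integrable (fun z => Q z w * hh z) gaussMeasure := by
    intro w
    by_contra hcon
    have h0 := MeasureTheory.integral_undef hcon
    rw [keyB s t h2 w] at h0
    have hpos : 0 < 2 * Real.sqrt (‖s‖) * (Real.exp ((‖w‖)^2/4))^2 := by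
      positivity
    rw [h0] at hpos
    exact lt_irrefl _ hpos
  have lint1 : ∀ z, ∫⁻ w, QQ z w * H w ∂gaussMeasure = ENNReal.ofReal C * H z := by
    intro z
    have e1 : ∀ w, QQ z w * H w = ENNReal.ofReal (Q z w * hh w) := fun w =>
      (ENNReal.ofReal_mul (norm_nonneg _)).symm
    rw [lintegral_congr e1,
      ← MeasureTheory.ofReal_integral_eq_lintegral_ofReal (int1 z)
        (Filter.Eventually.of_forall fun w => by positivity), keyA s t h2 z,
      ENNReal.ofReal_mul (by positivity)]
  have lint2 : ∀ w, ∫⁻ z, QQ z w * H z ∂gaussMeasure = ENNReal.ofReal C * H w := by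
    intro w
    have e1 : ∀ z, QQ z w * H z = ENNReal.ofReal (Q z w * hh z) := fun z =>
      (ENNReal.ofReal_mul (norm_nonneg _)).symm
    rw [lintegral_congr e1,
      ← MeasureTheory.ofReal_integral_eq_lintegral_ofReal (int2 w)
        (Filter.Eventually.of_forall fun z => by positivity), keyB s t h2 w,
      ENNReal.ofReal_mul (by positivity)]
  -- Cauchy-Schwarz pointwise
  set TT : ℂ → ℝ≥0∞ := fun z => ∫⁻ w, QQ z w * GG w ∂gaussMeasure with hTTdef
  set SS : ℂ → ℝ≥0∞ := fun z => ∫⁻ w, QQ z w * GG w^2 / H w ∂gaussMeasure with hSSdef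
  have half_sq : ∀ x : ℝ≥0∞, (x ^ ((1:ℝ)/2)) ^ (2:ℝ) = x := by
    intro x
    rw [← ENNReal.rpow_mul]
    norm_num
  have hTT : ∀ z, TT z ≤ (ENNReal.ofReal C * H z) ^ ((1:ℝ)/2) * (SS z) ^ ((1:ℝ)/2) := by
    intro z
    have hmul : ∀ w, QQ z w * GG w
        = ((fun w => (QQ z w * H w) ^ ((1:ℝ)/2)) * (fun w => (QQ z w * GG w^2 / H w) ^ ((1:ℝ)/2))) w := by
      intro w
      simp only [Pi.mul_apply]
      rw [← ENNReal.mul_rpow_of_nonneg _ _ (by norm_num : (0:ℝ) ≤ 1/2)]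
      have harr : QQ z w * H w * (QQ z w * GG w^2 / H w) = (QQ z w * GG w)^2 * (H w * (H w)⁻¹) := by
        rw [div_eq_mul_inv]; ring
      rw [harr, ENNReal.mul_inv_cancel (hH0 w) (hHtop w), mul_one,
        ← ENNReal.rpow_natCast (QQ z w * GG w) 2, ← ENNReal.rpow_mul]
      norm_num
    have hold := ENNReal.lintegral_mul_le_Lp_mul_Lq gaussMeasure
      (Real.holderConjugate_iff (p := 2) (q := 2) |>.mpr ⟨by norm_num, by norm_num⟩)
      (f := fun w => (QQ z w * H w) ^ ((1:ℝ)/2))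
      (g := fun w => (QQ z w * GG w^2 / H w) ^ ((1:ℝ)/2))
      (((hQQm1 z).mul hHmeas).pow_const _).aemeasurable
      (Measurable.aemeasurable (by have := hQQm1 z; fun_prop))
    rw [hTTdef]
    simp only []
    calc ∫⁻ w, QQ z w * GG w ∂gaussMeasure
        = ∫⁻ w, ((fun w => (QQ z w * H w) ^ ((1:ℝ)/2)) * (fun w => (QQ z w * GG w^2 / H w) ^ ((1:ℝ)/2))) w ∂gaussMeasure :=
          lintegral_congr hmul
      _ ≤ (∫⁻ w, ((QQ z w * H w) ^ ((1:ℝ)/2)) ^ (2:ℝ) ∂gaussMeasure) ^ ((1:ℝ)/2)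
          * (∫⁻ w, ((QQ z w * GG w^2 / H w) ^ ((1:ℝ)/2)) ^ (2:ℝ) ∂gaussMeasure) ^ ((1:ℝ)/2) := by
          simpa using hold
      _ = (ENNReal.ofReal C * H z) ^ ((1:ℝ)/2) * (SS z) ^ ((1:ℝ)/2) := by
          simp_rw [half_sq]
          rw [lint1 z, hSSdef]
  have hTT2 : ∀ z, (TT z)^2 ≤ (ENNReal.ofReal C * H z) * SS z := by
    intro z
    calc (TT z)^2 ≤ ((ENNReal.ofReal C * H z) ^ ((1:ℝ)/2) * (SS z) ^ ((1:ℝ)/2))^2 := by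
          exact pow_le_pow_left' (hTT z) 2
      _ = (ENNReal.ofReal C * H z) * SS z := by
          rw [mul_pow, ← ENNReal.rpow_natCast (_ ^ ((1:ℝ)/2)) 2, ← ENNReal.rpow_natCast (_ ^ ((1:ℝ)/2)) 2,
            ← ENNReal.rpow_mul, ← ENNReal.rpow_mul]
          norm_num
  -- main chain
  have hmain : ∫⁻ z, (TT z)^2 ∂gaussMeasure
      ≤ ENNReal.ofReal C * (ENNReal.ofReal C * ∫⁻ w, GG w^2 ∂gaussMeasure) := by
    calc ∫⁻ z, (TT z)^2 ∂gaussMeasure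
        ≤ ∫⁻ z, (ENNReal.ofReal C * H z) * SS z ∂gaussMeasure := lintegral_mono hTT2
      _ = ∫⁻ z, ENNReal.ofReal C * (H z * SS z) ∂gaussMeasure := by simp_rw [mul_assoc]
      _ = ENNReal.ofReal C * ∫⁻ z, H z * SS z ∂gaussMeasure :=
          lintegral_const_mul' _ _ ENNReal.ofReal_ne_top
      _ = ENNReal.ofReal C * ∫⁻ z, ∫⁻ w, H z * (QQ z w * GG w^2 / H w) ∂gaussMeasure ∂gaussMeasure := by
          congr 1
          refine lintegral_congr fun z => ?_
          exact (lintegral_const_mul' _ _ (hHtop z)).symm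
      _ = ENNReal.ofReal C * ∫⁻ w, ∫⁻ z, H z * (QQ z w * GG w^2 / H w) ∂gaussMeasure ∂gaussMeasure := by
          congr 1
          refine lintegral_lintegral_swap ?_
          refine Measurable.aemeasurable ?_
          exact (hHmeas.comp measurable_fst).mul
            ((hQQm.mul ((hGGmeas.pow_const 2).comp measurable_snd)).div (hHmeas.comp measurable_snd))
      _ = ENNReal.ofReal C * ∫⁻ w, (GG w^2 / H w) * (ENNReal.ofReal C * H w) ∂gaussMeasure := by
          congr 1
          refine lintegral_congr fun w => ?_
          have e2 : ∀ z, H z * (QQ z w * GG w^2 / H w) = (GG w^2 / H w) * (QQ z w * H z) := by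
            intro z; rw [div_eq_mul_inv, div_eq_mul_inv]; ring
          rw [lintegral_congr e2, lintegral_const_mul' _ _ ?fin, lint2 w]
          case fin =>
            exact (ENNReal.div_lt_top (by simpa [ENNReal.pow_eq_top_iff] using hGGtop w) (hH0 w)).ne
      _ = ENNReal.ofReal C * (ENNReal.ofReal C * ∫⁻ w, GG w^2 ∂gaussMeasure) := by
          congr 1
          rw [← lintegral_const_mul' (ENNReal.ofReal C) _ ENNReal.ofReal_ne_top]
          refine lintegral_congr fun w => ?_
          rw [div_eq_mul_inv,
            show (GG w^2 * (H w)⁻¹) * (ENNReal.ofReal C * H w)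
              = (ENNReal.ofReal C * GG w^2) * ((H w)⁻¹ * H w) from by ring,
            ENNReal.inv_mul_cancel (hH0 w) (hHtop w), mul_one]
  have hGG2 : ∫⁻ w, GG w^2 ∂gaussMeasure = ENNReal.ofReal (∫ w, (F w)^2 ∂gaussMeasure) := by
    have e1 : ∫⁻ w, GG w^2 ∂gaussMeasure = ∫⁻ w, ENNReal.ofReal ((F w)^2) ∂gaussMeasure := by
      refine lintegral_congr_ae ?_
      filter_upwards [hFG] with w hw
      rw [hGG]
      simp only []
      rw [← hw, ← ENNReal.ofReal_pow (hF0 w)]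
    rw [e1, ← MeasureTheory.ofReal_integral_eq_lintegral_ofReal hf2
      (Filter.Eventually.of_forall fun w => sq_nonneg _)]
  -- measurability of the Bochner inner integral
  have hrmeasG : StronglyMeasurable (fun z => ∫ w, Q z w * G w ∂gaussMeasure) := by
    apply MeasureTheory.StronglyMeasurable.integral_prod_right'
      (f := fun p : ℂ × ℂ => Q p.1 p.2 * G p.2)
    exact (hQc.measurable.mul (hGmeas.comp measurable_snd)).stronglyMeasurable
  have hr_eq : (fun z => ∫ w, Q z w * F w ∂gaussMeasure)
      = fun z => ∫ w, Q z w * G w ∂gaussMeasure := by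
    funext z
    refine integral_congr_ae ?_
    filter_upwards [hFG] with w hw
    rw [hw]
  have hr0 : ∀ z, 0 ≤ ∫ w, Q z w * F w ∂gaussMeasure := fun z =>
    integral_nonneg fun w => mul_nonneg (norm_nonneg _) (hF0 w)
  have hofr : ∀ z, ENNReal.ofReal (∫ w, Q z w * F w ∂gaussMeasure) ≤ TT z := by
    intro z
    by_cases hint : Integrable (fun w => Q z w * F w) gaussMeasure
    · rw [MeasureTheory.ofReal_integral_eq_lintegral_ofReal hint
        (Filter.Eventually.of_forall fun w => mul_nonneg (norm_nonneg _) (hF0 w))]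
      refine le_of_eq (lintegral_congr_ae ?_)
      filter_upwards [hFG] with w hw
      rw [ENNReal.ofReal_mul (norm_nonneg _), hw]
    · rw [MeasureTheory.integral_undef hint]
      simp
  have hint_r : ∫ z, (∫ w, Q z w * F w ∂gaussMeasure)^2 ∂gaussMeasure
      = (∫⁻ z, ENNReal.ofReal ((∫ w, Q z w * F w ∂gaussMeasure)^2) ∂gaussMeasure).toReal := by
    refine integral_eq_lintegral_of_nonneg_ae (Filter.Eventually.of_forall fun z => sq_nonneg _) ?_
    have hsm : StronglyMeasurable (fun z => (∫ w, Q z w * G w ∂gaussMeasure)^2) := by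
      simp_rw [pow_two]
      exact hrmeasG.mul hrmeasG
    have heq2 : (fun z => (∫ w, Q z w * F w ∂gaussMeasure)^2)
        = fun z => (∫ w, Q z w * G w ∂gaussMeasure)^2 := by
      funext z
      exact congrArg (· ^ 2) (congrFun hr_eq z)
    rw [heq2]
    exact hsm.aestronglyMeasurable
  have hb1 : ∫⁻ z, ENNReal.ofReal ((∫ w, Q z w * F w ∂gaussMeasure)^2) ∂gaussMeasure
      ≤ ∫⁻ z, (TT z)^2 ∂gaussMeasure := by
    refine lintegral_mono fun z => ?_
    rw [ENNReal.ofReal_pow (hr0 z)]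
    exact pow_le_pow_left' (hofr z) 2
  have hfin : ENNReal.ofReal C * (ENNReal.ofReal C * ∫⁻ w, GG w^2 ∂gaussMeasure) ≠ ∞ := by
    rw [hGG2]
    exact ENNReal.mul_ne_top ENNReal.ofReal_ne_top
      (ENNReal.mul_ne_top ENNReal.ofReal_ne_top ENNReal.ofReal_ne_top)
  have hle : ∫ z, (∫ w, Q z w * F w ∂gaussMeasure)^2 ∂gaussMeasure
      ≤ C * (C * ∫ z, (F z)^2 ∂gaussMeasure) := by
    rw [hint_r]
    have hmono := ENNReal.toReal_mono hfin (le_trans hb1 hmain)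
    refine le_trans hmono (le_of_eq ?_)
    rw [hGG2, ENNReal.toReal_mul, ENNReal.toReal_mul, ENNReal.toReal_ofReal hCpos.le,
      ENNReal.toReal_ofReal (integral_nonneg fun z => sq_nonneg _)]
  have hsqrt := Real.sqrt_le_sqrt hle
  refine le_trans hsqrt (le_of_eq ?_)
  rw [show C * (C * ∫ z, (F z)^2 ∂gaussMeasure) = C^2 * ∫ z, (F z)^2 ∂gaussMeasure from by ring,
    Real.sqrt_mul (sq_nonneg C), Real.sqrt_sq hCpos.le]
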